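/- For fixed n ≥ 1 and m ≥ 1, the determinant of the ml×ml block binomial-power matrix A with blocks Aᵢ = [C(n+j−1, k−1)·Xᵢ^{j−1}] (1 ≤ k ≤ l, 1 ≤ j ≤ ml, 1 ≤ i ≤ m), viewed as a polynomial in ℤ[X₁, …, X_m], is divisible by (X_j − Xᵢ)^{l²} for every pair 1 ≤ i < j ≤ m. -/

import Mathlib

open Finset Polynomial Nat MvPolynomial


lemma exists_poly (K : Type*) [Field K] [CharZero K] (n k t : ℕ) :
    ∃ q : K[X], q.natDegree ≤ k + t ∧
      ∀ c : ℕ, q.eval (c : K) = ((n + c).choose k : K) * (c.choose t : K) := by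
  refine ⟨Polynomial.C ((k ! : K)⁻¹ * (t ! : K)⁻¹) *
      ((descPochhammer K k).comp (Polynomial.X + Polynomial.C (n : K)) * descPochhammer K t),
      ?_, ?_⟩
  · refine le_trans (Polynomial.natDegree_C_mul_le _ _) ?_
    refine le_trans (Polynomial.natDegree_mul_le) ?_
    have h1 : ((descPochhammer K k).comp (Polynomial.X + Polynomial.C (n : K))).natDegree = k := by
      rw [Polynomial.natDegree_comp, Polynomial.natDegree_X_add_C, descPochhammer_natDegree,
        mul_one]
    rw [h1, descPochhammer_natDegree]
  · intro c
    have hk : (k ! : K) ≠ 0 := Nat.cast_ne_zero.mpr (Nat.factorial_ne_zero k)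
    have ht : (t ! : K) ≠ 0 := Nat.cast_ne_zero.mpr (Nat.factorial_ne_zero t)
    rw [Polynomial.eval_mul, Polynomial.eval_mul, Polynomial.eval_C, Polynomial.eval_comp,
      Polynomial.eval_add, Polynomial.eval_X, Polynomial.eval_C]
    rw [show ((c : K) + (n : K)) = ((n + c : ℕ) : K) by push_cast; ring]
    rw [descPochhammer_eval_eq_descFactorial, descPochhammer_eval_eq_descFactorial]
    rw [Nat.descFactorial_eq_factorial_mul_choose, Nat.descFactorial_eq_factorial_mul_choose]
    push_cast
    field_simp


lemma comb_lemma (l : ℕ) (t : Fin l → ℕ) (h : ∑ k, t k < l ^ 2) :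
    ∃ D : ℕ, D + 2 ≤ min (D + 1) l +
      (Finset.univ.filter (fun k : Fin l => (k : ℕ) + t k ≤ D)).card := by
  by_contra hc
  push_neg at hc
  have hl : 0 < l := by
    rcases Nat.eq_zero_or_pos l with h0 | h0
    · subst h0; simp at h
    · exact h0
  set N := 2 * l - 1 with hN
  have swap : ∑ D ∈ Finset.range N,
      (Finset.univ.filter (fun k : Fin l => D < (k : ℕ) + t k)).card
      = ∑ k : Fin l, min ((k : ℕ) + t k) N := by
    simp_rw [Finset.card_filter]
    rw [Finset.sum_comm]
    refine Finset.sum_congr rfl fun k _ => ?_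
    have hfil : (Finset.range N).filter (fun D => D < (k : ℕ) + t k)
        = Finset.range (min ((k : ℕ) + t k) N) := by
      ext D
      simp only [Finset.mem_filter, Finset.mem_range, Nat.lt_min]
      omega
    calc ∑ D ∈ Finset.range N, (if D < (k : ℕ) + t k then 1 else 0)
        = ((Finset.range N).filter (fun D => D < (k : ℕ) + t k)).card :=
          (Finset.card_filter _ _).symm
      _ = min ((k : ℕ) + t k) N := by rw [hfil, Finset.card_range]
  have hpart : ∀ D : ℕ,
      (Finset.univ.filter (fun k : Fin l => (k : ℕ) + t k ≤ D)).card
      + (Finset.univ.filter (fun k : Fin l => D < (k : ℕ) + t k)).card = l := by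
    intro D
    rw [Finset.card_filter, Finset.card_filter, ← Finset.sum_add_distrib]
    have : ∀ k : Fin l, ((if (k : ℕ) + t k ≤ D then 1 else 0)
        + (if D < (k : ℕ) + t k then 1 else 0)) = 1 := by
      intro k; split_ifs <;> omega
    rw [Finset.sum_congr rfl fun k _ => this k]
    simp
  have lower : ∀ D ∈ Finset.range N, min l (N - D)
      ≤ (Finset.univ.filter (fun k : Fin l => D < (k : ℕ) + t k)).card := by
    intro D hD
    have h1 := hc D
    have h2 := hpart D
    simp only [Finset.mem_range] at hD
    omega
  have hsum1 : ∑ D ∈ Finset.range N, min l (N - D) ≤ ∑ k : Fin l, min ((k : ℕ) + t k) N := by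
    rw [← swap]; exact Finset.sum_le_sum lower
  have hsum2 : ∑ k : Fin l, min ((k : ℕ) + t k) N ≤ (∑ k : Fin l, (k : ℕ)) + ∑ k, t k := by
    rw [← Finset.sum_add_distrib]
    exact Finset.sum_le_sum fun k _ => min_le_left _ _
  have hsum3 : (∑ k : Fin l, (k : ℕ)) + l ^ 2 ≤ ∑ D ∈ Finset.range N, min l (N - D) := by
    have hrefl : ∑ D ∈ Finset.range N, min l (N - D)
        = ∑ D ∈ Finset.range N, min l (D + 1) := by
      rw [← Finset.sum_range_reflect]
      refine Finset.sum_congr rfl fun D hD => ?_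
      simp only [Finset.mem_range] at hD
      congr 1
      omega
    rw [hrefl]
    have hsplit : Finset.range N = Finset.range l ∪ Finset.Ico l N := by
      rw [Finset.range_eq_Ico, ← Finset.Ico_union_Ico_eq_Ico (Nat.zero_le l) (by omega), Finset.range_eq_Ico]
    rw [hsplit, Finset.sum_union (by
      simp only [Finset.range_eq_Ico]
      exact Finset.Ico_disjoint_Ico_consecutive 0 l N)]
    have e1 : ∑ D ∈ Finset.range l, min l (D + 1) = (∑ D ∈ Finset.range l, D) + l := by
      rw [show (∑ D ∈ Finset.range l, min l (D + 1)) = ∑ D ∈ Finset.range l, (D + 1) from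
        Finset.sum_congr rfl fun D hD => by
          simp only [Finset.mem_range] at hD; omega]
      rw [Finset.sum_add_distrib, Finset.sum_const, Finset.card_range, smul_eq_mul, mul_one]
    have e2 : ∑ D ∈ Finset.Ico l N, min l (D + 1) = (N - l) * l := by
      rw [Finset.sum_congr rfl (fun D hD => ?_), Finset.sum_const, Nat.card_Ico, smul_eq_mul]
      have := (Finset.mem_Ico.mp hD).1
      omega
    have hNl : N - l = l - 1 := by omega
    rw [e1, e2, hNl, Fin.sum_univ_eq_sum_range (fun a => a) l]
    have hprod : (l - 1) * l + l = l * l := by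
      cases l with
      | zero => simp
      | succ l' => simp only [Nat.succ_sub_one]; ring
    have hsq : l ^ 2 = l * l := sq l
    omega
  omega

lemma aux_det_zero (m n l : ℕ) (hl : 0 < l) (i j : Fin m) (hij : i ≠ j)
    (blk : Fin (m * l) → Fin m) (hblk : ∀ r, (blk r : ℕ) = (r : ℕ) / l)
    (p : Fin (m * l) → ℕ) (hps : ∑ r, p r < l ^ 2) :
    (Matrix.of fun r c : Fin (m * l) =>
      if blk r = j then
        (((n + (c : ℕ)).choose ((r : ℕ) % l) : ℕ) : MvPolynomial (Fin m) ℤ) *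
          (((c : ℕ).choose (p r) : ℕ) : MvPolynomial (Fin m) ℤ) *
          MvPolynomial.X i ^ ((c : ℕ) - p r)
      else if p r = 0 then
        (((n + (c : ℕ)).choose ((r : ℕ) % l) : ℕ) : MvPolynomial (Fin m) ℤ) *
          MvPolynomial.X (blk r) ^ (c : ℕ)
      else 0).det = 0 := by
  classical
  by_cases hz : ∃ r, blk r ≠ j ∧ p r ≠ 0
  · obtain ⟨r, hr1, hr2⟩ := hz
    apply Matrix.det_eq_zero_of_row_eq_zero r
    intro c
    simp [Matrix.of_apply, if_neg hr1, if_neg hr2]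
  push_neg at hz
  -- setup
  set Rg := MvPolynomial (Fin m) ℤ with hRg
  let K := FractionRing Rg
  have hinj : Function.Injective (algebraMap Rg K) := IsFractionRing.injective Rg K
  haveI : CharZero K := charZero_of_injective_algebraMap hinj
  -- block row embeddings
  have hlt : ∀ (a : Fin m) (k : Fin l), l * (a : ℕ) + (k : ℕ) < m * l := by
    intro a k
    have h1 : l * ((a : ℕ) + 1) ≤ l * m := Nat.mul_le_mul_left l a.2
    have h2 : l * ((a : ℕ) + 1) = l * (a : ℕ) + l := by ring
    have h3 : l * m = m * l := Nat.mul_comm l m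
    have := k.2
    omega
  let ri : Fin l → Fin (m * l) := fun k => ⟨l * (i : ℕ) + (k : ℕ), hlt i k⟩
  let rj : Fin l → Fin (m * l) := fun k => ⟨l * (j : ℕ) + (k : ℕ), hlt j k⟩
  have hblk_ri : ∀ k, blk (ri k) = i := by
    intro k
    apply Fin.ext
    rw [hblk]
    show (l * (i : ℕ) + (k : ℕ)) / l = (i : ℕ)
    rw [Nat.mul_add_div hl, Nat.div_eq_of_lt k.2, add_zero]
  have hblk_rj : ∀ k, blk (rj k) = j := by
    intro k
    apply Fin.ext
    rw [hblk]
    show (l * (j : ℕ) + (k : ℕ)) / l = (j : ℕ)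
    rw [Nat.mul_add_div hl, Nat.div_eq_of_lt k.2, add_zero]
  have hmod_ri : ∀ k : Fin l, ((ri k : ℕ)) % l = (k : ℕ) := by
    intro k
    show (l * (i : ℕ) + (k : ℕ)) % l = (k : ℕ)
    rw [Nat.mul_add_mod, Nat.mod_eq_of_lt k.2]
  have hmod_rj : ∀ k : Fin l, ((rj k : ℕ)) % l = (k : ℕ) := by
    intro k
    show (l * (j : ℕ) + (k : ℕ)) % l = (k : ℕ)
    rw [Nat.mul_add_mod, Nat.mod_eq_of_lt k.2]
  have hinj_ri : Function.Injective ri := by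
    intro a b hab
    have := congrArg Fin.val hab
    simp only [ri] at this
    exact Fin.ext (by omega)
  have hinj_rj : Function.Injective rj := by
    intro a b hab
    have := congrArg Fin.val hab
    simp only [rj] at this
    exact Fin.ext (by omega)
  have hpri : ∀ k, p (ri k) = 0 := fun k => hz _ (by rw [hblk_ri k]; exact hij)
  -- the t function and comb lemma
  set tt : Fin l → ℕ := fun k => p (rj k) with htt
  have hts : ∑ k, tt k < l ^ 2 := by
    refine lt_of_le_of_lt ?_ hps
    calc ∑ k, tt k = ∑ r ∈ Finset.univ.image rj, p r :=
          (Finset.sum_image (fun a _ b _ hab => hinj_rj hab)).symm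
      _ ≤ ∑ r, p r := Finset.sum_le_sum_of_subset (Finset.subset_univ _)
  obtain ⟨D, hD⟩ := comb_lemma l tt hts
  -- spanning vectors
  set XX : K := algebraMap Rg K (MvPolynomial.X i) with hXX
  have hXXne : XX ≠ 0 := by
    rw [hXX]
    exact (map_ne_zero_iff _ hinj).mpr (MvPolynomial.X_ne_zero i)
  set bvec : ℕ → (Fin (m * l) → K) := fun a => fun c => ((c : ℕ) : K) ^ a * XX ^ (c : ℕ)
    with hbvec
  set bset : Finset (Fin (m * l) → K) := (Finset.range (D + 1)).image bvec with hbset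
  have hbcard : bset.card ≤ D + 1 :=
    le_trans (Finset.card_image_le) (le_of_eq (Finset.card_range _))
  -- key span membership
  have hkey : ∀ k₀ t₀ : ℕ, k₀ + t₀ ≤ D →
      (fun c : Fin (m * l) => (((n + (c : ℕ)).choose k₀ : ℕ) : K) *
        (((c : ℕ).choose t₀ : ℕ) : K) * XX ^ ((c : ℕ) - t₀))
        ∈ Submodule.span K (bset : Set (Fin (m * l) → K)) := by
    intro k₀ t₀ hkt
    obtain ⟨q, hqdeg, hqeval⟩ := exists_poly K n k₀ t₀
    have hrow : (fun c : Fin (m * l) => (((n + (c : ℕ)).choose k₀ : ℕ) : K) *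
        (((c : ℕ).choose t₀ : ℕ) : K) * XX ^ ((c : ℕ) - t₀))
        = ∑ a ∈ Finset.range (D + 1), (q.coeff a * (XX⁻¹) ^ t₀) • bvec a := by
      funext c
      rw [Finset.sum_apply]
      have hq := Polynomial.eval_eq_sum_range'
        (lt_of_le_of_lt (le_trans hqdeg hkt) (Nat.lt_succ_self D)) (((c : ℕ) : K))
      have hRHS : (∑ a ∈ Finset.range (D + 1), ((q.coeff a * (XX⁻¹) ^ t₀) • bvec a) c)
          = (XX⁻¹) ^ t₀ * XX ^ (c : ℕ) * q.eval (((c : ℕ) : K)) := by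
        rw [hq, Finset.mul_sum]
        refine Finset.sum_congr rfl fun a _ => ?_
        simp only [Pi.smul_apply, smul_eq_mul, hbvec]
        ring
      rw [hRHS, hqeval (c : ℕ)]
      rcases le_or_gt t₀ (c : ℕ) with hle | hlt
      · have hpow : XX ^ ((c : ℕ) - t₀) = (XX⁻¹) ^ t₀ * XX ^ (c : ℕ) := by
          have h1 : XX ^ (c : ℕ) = XX ^ ((c : ℕ) - t₀) * XX ^ t₀ := by
            rw [← pow_add]; congr 1; omega
          rw [h1, ← mul_assoc]
          rw [show (XX⁻¹) ^ t₀ * XX ^ ((c : ℕ) - t₀) * XX ^ t₀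
              = XX ^ ((c : ℕ) - t₀) * ((XX⁻¹ * XX) ^ t₀) from by rw [mul_pow]; ring]
          rw [inv_mul_cancel₀ hXXne, one_pow, mul_one]
        rw [hpow]; ring
      · rw [Nat.choose_eq_zero_of_lt hlt]
        push_cast
        ring
    rw [hrow]
    refine Submodule.sum_mem _ fun a ha => Submodule.smul_mem _ _ (Submodule.subset_span ?_)
    rw [hbset]
    exact Finset.mem_coe.mpr (Finset.mem_image_of_mem _ ha)
  -- the matrix over K
  set W : Matrix (Fin (m * l)) (Fin (m * l)) Rg := Matrix.of fun r c : Fin (m * l) =>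
      if blk r = j then
        (((n + (c : ℕ)).choose ((r : ℕ) % l) : ℕ) : MvPolynomial (Fin m) ℤ) *
          (((c : ℕ).choose (p r) : ℕ) : MvPolynomial (Fin m) ℤ) *
          MvPolynomial.X i ^ ((c : ℕ) - p r)
      else if p r = 0 then
        (((n + (c : ℕ)).choose ((r : ℕ) % l) : ℕ) : MvPolynomial (Fin m) ℤ) *
          MvPolynomial.X (blk r) ^ (c : ℕ)
      else 0 with hW
  set NM : Matrix (Fin (m * l)) (Fin (m * l)) K := W.map (algebraMap Rg K) with hNM
  -- row formulas over K
  have hrow_ri : ∀ k : Fin l, NM (ri k) = fun c : Fin (m * l) =>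
      (((n + (c : ℕ)).choose ((k : ℕ)) : ℕ) : K) *
        (((c : ℕ).choose 0 : ℕ) : K) * XX ^ ((c : ℕ) - 0) := by
    intro k
    funext c
    have h1 : blk (ri k) ≠ j := by rw [hblk_ri k]; exact hij
    simp only [hNM, Matrix.map_apply, hW, Matrix.of_apply]
    rw [if_neg h1, if_pos (hpri k), hmod_ri k, hblk_ri k, map_mul, map_pow]
    simp only [map_natCast, Nat.choose_zero_right, Nat.cast_one, mul_one, Nat.sub_zero, hXX]
  have hrow_rj : ∀ k : Fin l, NM (rj k) = fun c : Fin (m * l) =>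
      (((n + (c : ℕ)).choose ((k : ℕ)) : ℕ) : K) *
        (((c : ℕ).choose (tt k) : ℕ) : K) * XX ^ ((c : ℕ) - tt k) := by
    intro k
    funext c
    simp only [hNM, Matrix.map_apply, hW, Matrix.of_apply]
    rw [if_pos (hblk_rj k), hmod_rj k, map_mul, map_mul, map_pow]
    simp only [map_natCast, hXX, htt]
  -- dependence
  have hnli : ¬ LinearIndependent K (fun r : Fin (m * l) => NM r) := by
    intro hli
    set A : Finset (Fin l) := Finset.univ.filter (fun k : Fin l => (k : ℕ) ≤ D) with hA
    set B : Finset (Fin l) := Finset.univ.filter (fun k : Fin l => (k : ℕ) + tt k ≤ D) with hB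
    set S : Finset (Fin (m * l)) := A.image ri ∪ B.image rj with hS
    have hdisj : Disjoint (A.image ri) (B.image rj) := by
      rw [Finset.disjoint_left]
      rintro a ha hb
      obtain ⟨k1, _, rfl⟩ := Finset.mem_image.mp ha
      obtain ⟨k2, _, heq⟩ := Finset.mem_image.mp hb
      exact hij (by rw [← hblk_ri k1, ← heq, hblk_rj k2])
    have hAcard : min (D + 1) l ≤ A.card := by
      rw [← Fintype.card_fin (min (D + 1) l), ← Finset.card_univ]
      refine Finset.card_le_card_of_injOn
        (fun s => (⟨(s : ℕ), lt_of_lt_of_le s.2 (min_le_right _ _)⟩ : Fin l)) ?_ ?_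
      · intro s _
        simp only [hA, Finset.mem_coe, Finset.mem_filter, Finset.mem_univ, true_and, Fin.val_mk]
        have := s.2
        omega
      · intro a _ b _ hab
        have := congrArg Fin.val hab
        exact Fin.ext (by simpa using this)
    have hScard : D + 2 ≤ S.card := by
      rw [hS, Finset.card_union_of_disjoint hdisj,
        Finset.card_image_of_injective _ hinj_ri, Finset.card_image_of_injective _ hinj_rj]
      have := hD
      omega
    have hsub : Set.range (fun s : {x // x ∈ S} => NM s.1)
        ⊆ (Submodule.span K (bset : Set (Fin (m * l) → K)) : Set (Fin (m * l) → K)) := by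
      rintro _ ⟨⟨r, hr⟩, rfl⟩
      simp only
      have hr' := hr
      rw [hS, Finset.mem_union] at hr'
      rcases hr' with hs | hs
      · obtain ⟨k, hk, heq⟩ := Finset.mem_image.mp hs
        rw [hA, Finset.mem_filter] at hk
        rw [← heq, hrow_ri k]
        exact hkey (k : ℕ) 0 (by omega)
      · obtain ⟨k, hk, heq⟩ := Finset.mem_image.mp hs
        rw [hB, Finset.mem_filter] at hk
        rw [← heq, hrow_rj k]
        exact hkey (k : ℕ) (tt k) (by omega)
    have hli' : LinearIndependent K (fun s : {x // x ∈ S} => NM s.1) :=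
      hli.comp _ Subtype.val_injective
    have hle := linearIndependent_le_span' (fun s : {x // x ∈ S} => NM s.1) hli'
      (bset : Set (Fin (m * l) → K)) hsub
    have hcard1 : Fintype.card {x // x ∈ S} = S.card := Fintype.card_coe S
    have hcard2 : Fintype.card (bset : Set (Fin (m * l) → K)) = bset.card := by
      simp
    rw [Cardinal.mk_fintype, hcard1, hcard2, Nat.cast_le] at hle
    omega
  obtain ⟨g, hg, r₀, hr₀⟩ := Fintype.not_linearIndependent_iff.mp hnli
  have hdetK : NM.det = 0 := by
    rw [← Matrix.exists_vecMul_eq_zero_iff]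
    refine ⟨g, fun h0 => hr₀ (by rw [h0]; rfl), ?_⟩
    funext c
    have := congrFun hg c
    rw [Finset.sum_apply] at this
    simpa [Matrix.vecMul, dotProduct] using this
  have hmd := RingHom.map_det (algebraMap Rg K) W
  rw [RingHom.mapMatrix_apply, ← hNM, hdetK] at hmd
  exact hinj (hmd.trans (map_zero _).symm)

theorem det_block_binom_power_dvd (m n l : ℕ) (hm : 1 ≤ m) (hn : 1 ≤ n) :
    ∀ i j : Fin m, i < j →
      (MvPolynomial.X j - MvPolynomial.X i) ^ (l ^ 2) ∣
        Matrix.det (Matrix.of fun r c : Fin (m * l) =>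
          (((n + (c : ℕ)).choose ((r : ℕ) % l) : ℕ) :
              MvPolynomial (Fin m) ℤ) *
            MvPolynomial.X
              (⟨(r : ℕ) / l, Nat.div_lt_of_lt_mul (Nat.mul_comm m l ▸ r.isLt)⟩ : Fin m)
              ^ (c : ℕ)) := by
  intro i j hij
  classical
  rcases Nat.eq_zero_or_pos l with hl0 | hl
  · subst hl0
    norm_num
  have hijne : i ≠ j := Fin.ne_of_lt hij
  set Rg := MvPolynomial (Fin m) ℤ with hRg
  set d : Rg := MvPolynomial.X j - MvPolynomial.X i with hd
  set blk : Fin (m * l) → Fin m :=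
    fun r => (⟨(r : ℕ) / l, Nat.div_lt_of_lt_mul (Nat.mul_comm m l ▸ r.isLt)⟩ : Fin m)
    with hblkdef
  have hblk : ∀ r, (blk r : ℕ) = (r : ℕ) / l := fun r => rfl
  set w : Fin (m * l) → ℕ → Fin (m * l) → Rg := fun r t c =>
    if blk r = j then
      (((n + (c : ℕ)).choose ((r : ℕ) % l) : ℕ) : MvPolynomial (Fin m) ℤ) *
        (((c : ℕ).choose t : ℕ) : MvPolynomial (Fin m) ℤ) *
        MvPolynomial.X i ^ ((c : ℕ) - t)
    else if t = 0 then
      (((n + (c : ℕ)).choose ((r : ℕ) % l) : ℕ) : MvPolynomial (Fin m) ℤ) *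
        MvPolynomial.X (blk r) ^ (c : ℕ)
    else 0 with hw
  -- row decomposition
  have hrow : ∀ r : Fin (m * l),
      (fun c : Fin (m * l) =>
        (((n + (c : ℕ)).choose ((r : ℕ) % l) : ℕ) : MvPolynomial (Fin m) ℤ) *
          MvPolynomial.X (blk r) ^ (c : ℕ))
      = ∑ t ∈ Finset.range (m * l), fun c : Fin (m * l) => d ^ t * w r t c := by
    intro r
    funext c
    rw [Finset.sum_apply]
    by_cases hr : blk r = j
    · have hc1 : (c : ℕ) + 1 ≤ m * l := c.2
      have hzero : ∀ t ∈ Finset.range (m * l), t ∉ Finset.range ((c : ℕ) + 1)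
          → d ^ t * w r t c = 0 := by
        intro t _ ht
        have hct : (c : ℕ) < t := by simpa [Finset.mem_range] using ht
        simp [hw, hr, Nat.choose_eq_zero_of_lt hct]
      rw [← Finset.sum_subset (Finset.range_subset_range.mpr hc1) hzero]
      have hXj : (MvPolynomial.X j : Rg) = d + MvPolynomial.X i := by rw [hd]; ring
      rw [hr, hXj, add_pow, Finset.mul_sum]
      refine Finset.sum_congr rfl fun t ht => ?_
      simp only [hw, if_pos hr]
      ring
    · have h0 : (0 : ℕ) ∈ Finset.range (m * l) := by
        rw [Finset.mem_range]
        exact Nat.mul_pos (by omega) hl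
      rw [Finset.sum_eq_single_of_mem 0 h0 (by
        intro t _ htne
        simp [hw, hr, htne])]
      simp [hw, hr]
  -- determinant expansion
  have hdet : (Matrix.of fun r c : Fin (m * l) =>
        (((n + (c : ℕ)).choose ((r : ℕ) % l) : ℕ) : MvPolynomial (Fin m) ℤ) *
          MvPolynomial.X (blk r) ^ (c : ℕ)).det
      = ∑ pp ∈ Fintype.piFinset (fun _ : Fin (m * l) => Finset.range (m * l)),
          d ^ (∑ r, pp r) * (Matrix.of fun r c : Fin (m * l) => w r (pp r) c).det := by
    have hms := (Matrix.detRowAlternating (R := Rg) (n := Fin (m * l))).toMultilinearMap.map_sum_finset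
      (fun r t => fun c : Fin (m * l) => d ^ t * w r t c) (fun _ => Finset.range (m * l))
    have hof : (Matrix.of fun r c : Fin (m * l) =>
        (((n + (c : ℕ)).choose ((r : ℕ) % l) : ℕ) : MvPolynomial (Fin m) ℤ) *
          MvPolynomial.X (blk r) ^ (c : ℕ))
        = fun r => ∑ t ∈ Finset.range (m * l), fun c : Fin (m * l) => d ^ t * w r t c :=
      funext hrow
    calc (Matrix.of fun r c : Fin (m * l) =>
        (((n + (c : ℕ)).choose ((r : ℕ) % l) : ℕ) : MvPolynomial (Fin m) ℤ) *
          MvPolynomial.X (blk r) ^ (c : ℕ)).det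
        = ∑ pp ∈ Fintype.piFinset (fun _ : Fin (m * l) => Finset.range (m * l)),
            Matrix.det (fun r c => d ^ pp r * w r (pp r) c) := by
          rw [show (Matrix.of fun r c : Fin (m * l) =>
            (((n + (c : ℕ)).choose ((r : ℕ) % l) : ℕ) : MvPolynomial (Fin m) ℤ) *
              MvPolynomial.X (blk r) ^ (c : ℕ)).det
            = Matrix.detRowAlternating (R := Rg) (n := Fin (m * l))
              (fun r => ∑ t ∈ Finset.range (m * l), fun c : Fin (m * l) => d ^ t * w r t c)
            from congrArg _ hof]
          exact hms
      _ = ∑ pp ∈ Fintype.piFinset (fun _ : Fin (m * l) => Finset.range (m * l)),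
            d ^ (∑ r, pp r) * (Matrix.of fun r c : Fin (m * l) => w r (pp r) c).det := by
          refine Finset.sum_congr rfl fun pp _ => ?_
          rw [show (Matrix.det (fun r c => d ^ pp r * w r (pp r) c))
              = Matrix.det (Matrix.of fun r c =>
                  (fun x => d ^ pp x) r * (Matrix.of fun r c : Fin (m * l) => w r (pp r) c) r c)
              from rfl]
          rw [Matrix.det_mul_column, Finset.prod_pow_eq_pow_sum]
  have hMeq : (Matrix.of fun r c : Fin (m * l) =>
      (((n + (c : ℕ)).choose ((r : ℕ) % l) : ℕ) : MvPolynomial (Fin m) ℤ) *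
        MvPolynomial.X
          (⟨(r : ℕ) / l, Nat.div_lt_of_lt_mul (Nat.mul_comm m l ▸ r.isLt)⟩ : Fin m) ^ (c : ℕ))
      = Matrix.of fun r c : Fin (m * l) =>
        (((n + (c : ℕ)).choose ((r : ℕ) % l) : ℕ) : MvPolynomial (Fin m) ℤ) *
          MvPolynomial.X (blk r) ^ (c : ℕ) := rfl
  rw [hMeq, hdet]
  refine Finset.dvd_sum fun pp _ => ?_
  by_cases hle : l ^ 2 ≤ ∑ r, pp r
  · exact Dvd.dvd.mul_right (pow_dvd_pow d hle) _
  · have h0 : (Matrix.of fun r c : Fin (m * l) => w r (pp r) c).det = 0 := by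
      have := aux_det_zero m n l hl i j hijne blk hblk pp (by omega)
      simpa [hw] using this
    rw [h0, mul_zero]
    exact dvd_zero _
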